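/- For all x, y in the unit disk B² ⊂ ℂ, s_{B²}(x,y) ≥ |x−y| / sqrt(|x−y|² + (2 − |x+y|)²). -/

import Mathlib

/-- Triangular ratio metric of the unit disk. -/
noncomputable def sB (x y : ℂ) : ℝ :=
  ‖x - y‖ /
    sInf ((fun z => ‖x - z‖ + ‖z - y‖) '' {z : ℂ | ‖z‖ = 1})

theorem stmt_16 (x y : ℂ) (hx : ‖x‖ < 1) (hy : ‖y‖ < 1) :
    ‖x - y‖ /
        Real.sqrt (‖x - y‖ ^ 2 + (2 - ‖x + y‖) ^ 2) ≤ sB x y := by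
  set S := (fun z => ‖x - z‖ + ‖z - y‖) '' {z : ℂ | ‖z‖ = 1}
    with hS
  have hSne : S.Nonempty := ⟨_, ⟨1, by simp, rfl⟩⟩
  have hlb : ∀ b ∈ S, (1 - ‖x‖) + (1 - ‖y‖) ≤ b := by
    rintro b ⟨z, hz, rfl⟩
    have hz1 : ‖z‖ = 1 := hz
    have h1 : ‖z‖ - ‖x‖ ≤ ‖x - z‖ := by
      rw [norm_sub_rev]
      simpa using norm_sub_norm_le z x
    have h2 : ‖z‖ - ‖y‖ ≤ ‖z - y‖ := by
      simpa using norm_sub_norm_le z y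
    simp only
    rw [hz1] at h1 h2
    linarith
  have hinfpos : 0 < sInf S :=
    lt_of_lt_of_le (by linarith) (le_csInf hSne hlb)
  -- choose the boundary point
  set z₀ : ℂ := if h : x + y = 0 then 1 else (x + y) / ((‖x + y‖ : ℝ) : ℂ)
    with hz₀def
  have hr2 : ‖x + y‖ < 2 := by
    calc ‖x + y‖ ≤ ‖x‖ + ‖y‖ := norm_add_le x y
    _ < 2 := by linarith
  have hz₀ : ‖z₀‖ = 1 := by
    by_cases h : x + y = 0
    · simp [hz₀def, h]
    · have hr : 0 < ‖x + y‖ := norm_pos_iff.mpr h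
      rw [hz₀def, dif_neg h, norm_div, Complex.norm_real, Real.norm_eq_abs, abs_of_pos hr, div_self hr.ne']
  have key : ‖(x + y) - 2 * z₀‖ = 2 - ‖x + y‖ := by
    by_cases h : x + y = 0
    · simp [hz₀def, h]
    · have hr : 0 < ‖x + y‖ := norm_pos_iff.mpr h
      have heq : (x + y) - 2 * z₀ = ((1 - 2 / ‖x + y‖ : ℝ) : ℂ) * (x + y) := by
        rw [hz₀def, dif_neg h]
        have hrc : ((‖x + y‖ : ℝ) : ℂ) ≠ 0 := by
          exact_mod_cast Complex.ofReal_ne_zero.mpr hr.ne'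
        push_cast
        field_simp
      rw [heq, norm_mul, Complex.norm_real, Real.norm_eq_abs]
      have h1 : (1 : ℝ) ≤ 2 / ‖x + y‖ := by
        rw [le_div_iff₀ hr]; linarith
      rw [abs_of_nonpos (by linarith)]
      field_simp
      ring
  have hsum : (‖x - z₀‖ + ‖z₀ - y‖) ^ 2 ≤
      ‖x - y‖ ^ 2 + (2 - ‖x + y‖) ^ 2 := by
    have par := parallelogram_law_with_norm ℝ (x - z₀) (z₀ - y)
    have e1 : (x - z₀) + (z₀ - y) = x - y := by ring
    have e2 : (x - z₀) - (z₀ - y) = (x + y) - 2 * z₀ := by ring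
    rw [e1, e2] at par
    rw [key] at par
    nlinarith [sq_nonneg (‖x - z₀‖ - ‖z₀ - y‖),
      norm_nonneg (x - z₀), norm_nonneg (z₀ - y)]
  have hmem : ‖x - z₀‖ + ‖z₀ - y‖ ∈ S := ⟨z₀, hz₀, rfl⟩
  have hinf_le : sInf S ≤ ‖x - z₀‖ + ‖z₀ - y‖ :=
    csInf_le ⟨0, fun b hb => le_trans (by linarith [hlb b hb]) (hlb b hb)⟩ hmem
  have hle : sInf S ≤ Real.sqrt (‖x - y‖ ^ 2 + (2 - ‖x + y‖) ^ 2) := by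
    refine le_trans hinf_le ?_
    have := Real.sqrt_le_sqrt hsum
    rwa [Real.sqrt_sq (by positivity)] at this
  rw [sB, ← hS]
  gcongr
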